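/- Assume the Riemann hypothesis. Let σ > 1/2, let 0 < δ ≤ 1/2, let ε > 0 be sufficiently small, and let t be real with −t > T + T^ε and T ≥ 2. Then ∑_{(−t−T)^δ < m ≤ (−t)^δ} ∑_{n < m} ((−t − m^{1/δ})/(2π)) · (m/n)^{it} · Λ(m/n) · (mn)^{−σ} · (m/n)^{−1/2} ≪ T^{2δ} + T^{1−εδ(σ−1/2)} if −t ≤ 2T, and ≪ (−t)^{2δ} + T·(−t)^{−δ(σ−1/2)} if −t > 2T, where m, n range over positive integers. -/

import Mathlib

open Complex Real

open Classical in
/-- The multiplicity (order of vanishing) of `riemannZeta` at a point. -/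
noncomputable def zetaZeroOrder (ρ : ℂ) : ℕ :=
  if h : AnalyticAt ℂ riemannZeta ρ then (analyticOrderAt riemannZeta ρ).toNat else 0

/-- The set of nontrivial zeros `ρ` of the Riemann zeta function with `a < Im ρ ≤ b`. -/
def zetaZerosIn (a b : ℝ) : Set ℂ :=
  {ρ : ℂ | riemannZeta ρ = 0 ∧ 0 ≤ ρ.re ∧ ρ.re ≤ 1 ∧ a < ρ.im ∧ ρ.im ≤ b}

/-- The sum of `f γ` over the imaginary parts `γ` of the nontrivial zeros of `riemannZeta`
with `a < γ ≤ b`, counted with multiplicity (real-valued version). -/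
noncomputable def zetaZeroSum (a b : ℝ) (f : ℝ → ℝ) : ℝ :=
  ∑ᶠ ρ ∈ zetaZerosIn a b, (zetaZeroOrder ρ : ℝ) * f ρ.im

/-- The sum of `f γ` over the imaginary parts `γ` of the nontrivial zeros of `riemannZeta`
with `a < γ ≤ b`, counted with multiplicity (complex-valued version). -/
noncomputable def zetaZeroSumC (a b : ℝ) (f : ℝ → ℂ) : ℂ :=
  ∑ᶠ ρ ∈ zetaZerosIn a b, (zetaZeroOrder ρ : ℂ) * f ρ.im

noncomputable def zetaMainTerm (σ t T : ℝ) : ℝ :=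
  (riemannZeta (2 * σ)).re * (T / (2 * π)) * Real.log (T / (2 * π * Real.exp 1)) +
    (riemannZeta (2 * σ)).re *
      (deriv riemannZeta (σ + 1 / 2 + t * I) / riemannZeta (σ + 1 / 2 + t * I)).re * (T / π)

/-- The von Mangoldt function extended to the reals: `ΛR x = Λ n` if `x = n` for a natural
number `n`, and `0` otherwise (in particular it vanishes unless `x` is a prime power). -/
noncomputable def vonMangoldtR (x : ℝ) : ℝ :=
  if (⌊x⌋₊ : ℝ) = x then ArithmeticFunction.vonMangoldt ⌊x⌋₊ else 0

/-- `⟨x⟩`: the distance from `x` to the nearest prime power other than `x` itself. -/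
noncomputable def primePowerGap (x : ℝ) : ℝ :=
  sInf {d : ℝ | ∃ q : ℕ, IsPrimePow q ∧ (q : ℝ) ≠ x ∧ d = |x - (q : ℝ)|}

/-- The double sum `D''` of formula (31) of the paper. -/
noncomputable def Dsum (σ δ t T : ℝ) : ℂ :=
  ∑ m ∈ Finset.Ioc ⌊(-t - T) ^ δ⌋₊ ⌊(-t) ^ δ⌋₊, ∑ n ∈ Finset.Ico 1 m,
    (((-t - (m : ℝ) ^ (1 / δ)) / (2 * π) * vonMangoldtR ((m : ℝ) / (n : ℝ)) *
        ((m : ℝ) * (n : ℝ)) ^ (-σ) * ((m : ℝ) / (n : ℝ)) ^ (-(1 / 2 : ℝ)) : ℝ) : ℂ) *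
      (((m : ℝ) / (n : ℝ) : ℝ) : ℂ) ^ ((t : ℂ) * I)

section DsumAux

/-- Lower telescoping step: `c * (x+1)^(-(c+1)) ≤ x^(-c) - (x+1)^(-c)`. -/
lemma step_lower {c x : ℝ} (hc : 0 < c) (hx : 0 < x) :
    c * (x + 1) ^ (-(c + 1)) ≤ x ^ (-c) - (x + 1) ^ (-c) := by
  have hx1 : 0 < x + 1 := by linarith
  have hlog : 1 / (x + 1) ≤ Real.log ((x + 1) / x) := by
    have h := Real.log_le_sub_one_of_pos (show 0 < x / (x + 1) by positivity)
    have hrw : Real.log (x / (x + 1)) = -Real.log ((x + 1) / x) := by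
      rw [← Real.log_inv]
      congr 1
      field_simp
    rw [hrw] at h
    have h2 : x / (x + 1) - 1 = -(1 / (x + 1)) := by field_simp; ring
    linarith
  have hexp : 1 + c / (x + 1) ≤ ((x + 1) / x) ^ c := by
    rw [Real.rpow_def_of_pos (by positivity)]
    have := Real.add_one_le_exp (Real.log ((x + 1) / x) * c)
    have h3 : c / (x + 1) ≤ Real.log ((x + 1) / x) * c := by
      rw [div_eq_mul_one_div, mul_comm]
      exact mul_le_mul_of_nonneg_right hlog hc.le
    linarith
  have hkey : (x + 1) ^ (-c) * (1 + c / (x + 1)) ≤ x ^ (-c) := by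
    have h4 : (x + 1) ^ (-c) * ((x + 1) / x) ^ c = x ^ (-c) := by
      rw [Real.div_rpow hx1.le hx.le, Real.rpow_neg hx1.le, Real.rpow_neg hx.le]
      field_simp
    calc (x + 1) ^ (-c) * (1 + c / (x + 1)) ≤ (x + 1) ^ (-c) * ((x + 1) / x) ^ c :=
          mul_le_mul_of_nonneg_left hexp (Real.rpow_nonneg hx1.le _)
      _ = x ^ (-c) := h4
  have h5 : (x + 1) ^ (-c) * (c / (x + 1)) = c * (x + 1) ^ (-(c + 1)) := by
    rw [show -(c + 1) = -c + (-1) by ring, Real.rpow_add hx1, Real.rpow_neg_one]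
    field_simp
  nlinarith [hkey, h5]

/-- Upper telescoping step: `x^(-c) - (x+1)^(-c) ≤ c * x^(-(c+1))`. -/
lemma step_upper {c x : ℝ} (hc : 0 < c) (hx : 0 < x) :
    x ^ (-c) - (x + 1) ^ (-c) ≤ c * x ^ (-(c + 1)) := by
  have hx1 : 0 < x + 1 := by linarith
  have hlog : Real.log (x / (x + 1)) ≥ -(1 / x) := by
    have h := Real.log_le_sub_one_of_pos (show 0 < (x + 1) / x by positivity)
    have hrw : Real.log ((x + 1) / x) = -Real.log (x / (x + 1)) := by
      rw [← Real.log_inv]; congr 1; field_simp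
    rw [hrw] at h
    have h2 : (x + 1) / x - 1 = 1 / x := by field_simp; ring
    linarith
  have hexp : 1 - c / x ≤ (x / (x + 1)) ^ c := by
    rw [Real.rpow_def_of_pos (by positivity)]
    have := Real.add_one_le_exp (Real.log (x / (x + 1)) * c)
    have h3 : -(c / x) ≤ Real.log (x / (x + 1)) * c := by
      have := mul_le_mul_of_nonneg_right hlog hc.le
      have heq : -(1 / x) * c = -(c / x) := by field_simp
      linarith [mul_le_mul_of_nonneg_right hlog hc.le]
    linarith
  have hkey : x ^ (-c) * (1 - c / x) ≤ (x + 1) ^ (-c) := by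
    have h4 : x ^ (-c) * (x / (x + 1)) ^ c = (x + 1) ^ (-c) := by
      rw [Real.div_rpow hx.le hx1.le, Real.rpow_neg hx1.le, Real.rpow_neg hx.le]
      field_simp
    calc x ^ (-c) * (1 - c / x) ≤ x ^ (-c) * (x / (x + 1)) ^ c :=
          mul_le_mul_of_nonneg_left hexp (Real.rpow_nonneg hx.le _)
      _ = (x + 1) ^ (-c) := h4
  have h5 : x ^ (-c) * (c / x) = c * x ^ (-(c + 1)) := by
    rw [show -(c + 1) = -c + (-1) by ring, Real.rpow_add hx, Real.rpow_neg_one]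
    field_simp
  nlinarith [hkey, h5]


/-- Tail sum bound: `∑_{a < k ≤ X} k^(-(c+1)) ≤ a^(-c)/c` for `a ≥ 1`. -/
lemma sum_Ioc_rpow_le {c : ℝ} (hc : 0 < c) {a : ℕ} (ha : 1 ≤ a) (X : ℕ) :
    ∑ k ∈ Finset.Ioc a X, (k : ℝ) ^ (-(c + 1)) ≤ (a : ℝ) ^ (-c) / c := by
  have h1 : Finset.Ioc a X = Finset.Ico (a + 1) (X + 1) := by
    ext k; simp only [Finset.mem_Ioc, Finset.mem_Ico]; omega
  rw [h1, Finset.sum_Ico_eq_sum_range]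
  set n := X + 1 - (a + 1) with hn
  rw [le_div_iff₀ hc, mul_comm]
  calc c * ∑ k ∈ Finset.range n, ((a + 1 + k : ℕ) : ℝ) ^ (-(c + 1))
      = ∑ i ∈ Finset.range n, c * ((a + 1 + i : ℕ) : ℝ) ^ (-(c + 1)) := Finset.mul_sum _ _ _
    _ ≤ ∑ i ∈ Finset.range n,
          (((a + i : ℕ) : ℝ) ^ (-c) - ((a + (i + 1) : ℕ) : ℝ) ^ (-c)) := by
        refine Finset.sum_le_sum fun i _ => ?_
        have hx : (0 : ℝ) < ((a + i : ℕ) : ℝ) := by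
          exact_mod_cast Nat.lt_of_lt_of_le Nat.zero_lt_one (by omega)
        have e1 : ((a + 1 + i : ℕ) : ℝ) = ((a + i : ℕ) : ℝ) + 1 := by push_cast; ring
        have e2 : ((a + (i + 1) : ℕ) : ℝ) = ((a + i : ℕ) : ℝ) + 1 := by push_cast; ring
        rw [e1, e2]
        exact step_lower hc hx
    _ = ((a + 0 : ℕ) : ℝ) ^ (-c) - ((a + n : ℕ) : ℝ) ^ (-c) :=
        Finset.sum_range_sub' (fun i => ((a + i : ℕ) : ℝ) ^ (-c)) n
    _ ≤ (a : ℝ) ^ (-c) := by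
        have : (0:ℝ) ≤ ((a + n : ℕ) : ℝ) ^ (-c) := Real.rpow_nonneg (by positivity) _
        simp only [Nat.add_zero]
        linarith

/-- `∑_{a < k ≤ X} k^(-(c+1)) ≤ (1+1/c)·2^c·(a+1)^(-c)`, valid for all `a ≥ 0`. -/
lemma sum_Ioc_rpow_le' {c : ℝ} (hc : 0 < c) (a X : ℕ) :
    ∑ k ∈ Finset.Ioc a X, (k : ℝ) ^ (-(c + 1))
      ≤ (1 + 1 / c) * 2 ^ c * ((a : ℝ) + 1) ^ (-c) := by
  rcases Nat.eq_zero_or_pos a with rfl | ha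
  · -- a = 0
    simp only [Nat.cast_zero, zero_add, Real.one_rpow]
    have h0 : Finset.Ioc 0 X = Finset.Icc 1 X := by
      ext k; simp only [Finset.mem_Ioc, Finset.mem_Icc]; omega
    rw [h0]
    rcases Nat.eq_zero_or_pos X with rfl | hX
    · simp; positivity
    · rw [← Finset.Ioc_insert_left hX, Finset.sum_insert (by simp)]
      have h1 : ((1 : ℕ) : ℝ) ^ (-(c + 1)) = 1 := by simp
      have h2 := sum_Ioc_rpow_le hc (le_refl 1) X
      have h3 : ((1:ℕ) : ℝ) ^ (-c) = 1 := by simp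
      rw [h3] at h2
      have h4 : (1:ℝ) ≤ 2 ^ c := Real.one_le_rpow (by norm_num) hc.le
      have h5 : 0 < 1 + 1/c := by positivity
      rw [h1]
      nlinarith [h2]
  · have h2 := sum_Ioc_rpow_le hc ha X
    refine h2.trans ?_
    have ha1 : (1:ℝ) ≤ (a:ℝ) := by exact_mod_cast ha
    have key : (a : ℝ) ^ (-c) ≤ 2 ^ c * ((a:ℝ) + 1) ^ (-c) := by
      have h6 : ((a:ℝ) + 1) ≤ 2 * a := by linarith
      have h7 : ((2 * a : ℝ)) ^ (-c) ≤ ((a:ℝ) + 1) ^ (-c) :=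
        Real.rpow_le_rpow_of_nonpos (by linarith) h6 (by linarith)
      have h8 : ((2 * a : ℝ)) ^ (-c) = 2 ^ (-c) * (a:ℝ) ^ (-c) :=
        Real.mul_rpow (by norm_num) (by positivity)
      have h9 : (0:ℝ) < 2 ^ c := Real.rpow_pos_of_pos (by norm_num) _
      have h10 : (2:ℝ) ^ c * (2:ℝ) ^ (-c) = 1 := by
        rw [← Real.rpow_add (by norm_num)]; simp
      calc (a:ℝ) ^ (-c) = 2 ^ c * ((2:ℝ) ^ (-c) * (a:ℝ) ^ (-c)) := by
            rw [← mul_assoc, h10, one_mul]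
        _ = 2 ^ c * ((2 * a : ℝ)) ^ (-c) := by rw [h8]
        _ ≤ 2 ^ c * ((a:ℝ) + 1) ^ (-c) := mul_le_mul_of_nonneg_left h7 h9.le
    have hpos : (0:ℝ) ≤ ((a:ℝ)+1) ^ (-c) := Real.rpow_nonneg (by positivity) _
    have hc' : 0 < 1/c := by positivity
    calc (a:ℝ) ^ (-c) / c = (1/c) * (a:ℝ) ^ (-c) := by ring
      _ ≤ (1/c) * (2 ^ c * ((a:ℝ) + 1) ^ (-c)) := mul_le_mul_of_nonneg_left key hc'.le
      _ ≤ (1 + 1/c) * 2 ^ c * ((a:ℝ) + 1) ^ (-c) := by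
          have h9 : (0:ℝ) < 2 ^ c := Real.rpow_pos_of_pos (by norm_num) _
          nlinarith


lemma rpow_le_tail_sum {c : ℝ} (hc : 0 < c) {q X : ℕ} (hq : 1 ≤ q) (hqX : q ≤ X) :
    (q:ℝ) ^ (-c) ≤ c * (∑ k ∈ Finset.Icc q X, (k:ℝ) ^ (-(c+1))) + ((X:ℝ)+1) ^ (-c) := by
  set n := X + 1 - q with hn
  have htel := Finset.sum_range_sub' (fun i => ((q + i : ℕ) : ℝ) ^ (-c)) n
  have hend : q + n = X + 1 := by omega
  have hsum : ∑ k ∈ Finset.Icc q X, (k:ℝ) ^ (-(c+1))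
      = ∑ i ∈ Finset.range n, ((q + i : ℕ) : ℝ) ^ (-(c+1)) := by
    have h1 : Finset.Icc q X = Finset.Ico q (X + 1) := by
      ext k; simp only [Finset.mem_Icc, Finset.mem_Ico]; omega
    rw [h1, Finset.sum_Ico_eq_sum_range]
  have hbound : ((q + 0 : ℕ) : ℝ) ^ (-c) - ((q + n : ℕ) : ℝ) ^ (-c)
      ≤ c * ∑ i ∈ Finset.range n, ((q + i : ℕ) : ℝ) ^ (-(c+1)) := by
    rw [← htel, Finset.mul_sum]
    refine Finset.sum_le_sum fun i _ => ?_
    have hx : (0 : ℝ) < ((q + i : ℕ) : ℝ) := by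
      exact_mod_cast Nat.lt_of_lt_of_le Nat.zero_lt_one (by omega)
    have e2 : ((q + (i + 1) : ℕ) : ℝ) = ((q + i : ℕ) : ℝ) + 1 := by push_cast; ring
    rw [e2]
    exact step_upper hc hx
  rw [hsum]
  have e3 : ((q + n : ℕ) : ℝ) = (X : ℝ) + 1 := by rw [hend]; push_cast; ring
  simp only [Nat.add_zero] at hbound
  rw [e3] at hbound
  linarith


/-- Chebyshev-type bound: `ψ(N) ≤ 40 N`. -/
lemma psi_bound (N : ℕ) :
    ∑ k ∈ Finset.Icc 1 N, ArithmeticFunction.vonMangoldt k ≤ 40 * N := by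
  rcases Nat.eq_zero_or_pos N with rfl | hN
  · simp
  have hN0 : N ≠ 0 := hN.ne'
  have hN1 : (1:ℝ) ≤ (N:ℝ) := by exact_mod_cast hN
  rw [← Finset.sum_filter_add_sum_filter_not (Finset.Icc 1 N) Nat.Prime]
  have hA : ∑ k ∈ (Finset.Icc 1 N).filter Nat.Prime, ArithmeticFunction.vonMangoldt k ≤ 2 * N := by
    have hset : (Finset.Icc 1 N).filter Nat.Prime
        = (Finset.range (N+1)).filter Nat.Prime := by
      ext p
      simp only [Finset.mem_filter, Finset.mem_Icc, Finset.mem_range]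
      constructor
      · rintro ⟨⟨h1, h2⟩, hp⟩; exact ⟨by omega, hp⟩
      · rintro ⟨h1, hp⟩; exact ⟨⟨hp.one_lt.le, by omega⟩, hp⟩
    have heached : ∀ k ∈ (Finset.Icc 1 N).filter Nat.Prime, ArithmeticFunction.vonMangoldt k = Real.log k := by
      intro k hk
      exact ArithmeticFunction.vonMangoldt_apply_prime (Finset.mem_filter.mp hk).2
    rw [Finset.sum_congr rfl heached, hset]
    have hlog : ∑ p ∈ (Finset.range (N+1)).filter Nat.Prime, Real.log (p:ℝ)
        = Real.log (((primorial N) : ℕ) : ℝ) := by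
      rw [primorial]
      push_cast
      rw [Real.log_prod]
      intro p hp
      have := (Finset.mem_filter.mp hp).2.pos
      positivity
    rw [hlog]
    have h1 : (((primorial N) : ℕ) : ℝ) ≤ ((4:ℝ)) ^ N := by
      have := primorial_le_4_pow N
      exact_mod_cast this
    have h2 : Real.log (((primorial N) : ℕ) : ℝ) ≤ Real.log ((4:ℝ) ^ N) := by
      apply Real.log_le_log (by exact_mod_cast primorial_pos N) h1
    have h3 : Real.log ((4:ℝ) ^ N) = N * Real.log 4 := by rw [Real.log_pow]
    have h4 : Real.log 4 ≤ 2 := by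
      have : (4:ℝ) = 2 ^ 2 := by norm_num
      rw [this, Real.log_pow]
      have := Real.log_two_lt_d9
      push_cast
      nlinarith
    calc Real.log (((primorial N) : ℕ) : ℝ) ≤ N * Real.log 4 := by rw [← h3]; exact h2
      _ ≤ N * 2 := by nlinarith [Real.log_nonneg (show (1:ℝ) ≤ 4 by norm_num), hN1]
      _ = 2 * N := by ring
  have hB : ∑ k ∈ (Finset.Icc 1 N).filter (fun k => ¬ k.Prime), ArithmeticFunction.vonMangoldt k ≤ 38 * N := by
    set S := ((Finset.Icc 1 N).filter (fun k => ¬ k.Prime)).filter IsPrimePow with hS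
    have hred : ∑ k ∈ S, ArithmeticFunction.vonMangoldt k
        = ∑ k ∈ (Finset.Icc 1 N).filter (fun k => ¬ k.Prime), ArithmeticFunction.vonMangoldt k := by
      apply Finset.sum_filter_of_ne
      intro k _ hk
      exact ArithmeticFunction.vonMangoldt_ne_zero_iff.mp hk
    rw [← hred]
    -- structure of elements of S
    have hstruct : ∀ k ∈ S, (k.minFac) ^ (k.factorization k.minFac) = k ∧
        k.minFac ∈ Finset.Icc 2 (Nat.sqrt N) ∧
        k.factorization k.minFac ∈ Finset.Icc 2 (Nat.log 2 N) := by
      intro k hk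
      simp only [hS, Finset.mem_filter, Finset.mem_Icc] at hk
      obtain ⟨⟨⟨hk1, hkN⟩, hknp⟩, hkpp⟩ := hk
      obtain ⟨p, j, hp, hj, hpj⟩ := (isPrimePow_nat_iff k).mp hkpp
      have hj2 : 2 ≤ j := by
        by_contra h
        push_neg at h
        have hj1 : j = 1 := by omega
        apply hknp; rw [← hpj, hj1, pow_one]; exact hp
      have hminfac : k.minFac = p := by rw [← hpj]; exact hp.pow_minFac (by omega)
      have hfact : k.factorization p = j := by
        rw [← hpj, hp.factorization_pow, Finsupp.single_eq_same]
      refine ⟨by rw [hminfac, hfact, hpj], ?_, ?_⟩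
      · rw [hminfac]
        refine Finset.mem_Icc.mpr ⟨hp.two_le, ?_⟩
        rw [Nat.le_sqrt]
        calc p * p = p ^ 2 := (sq p).symm
          _ ≤ p ^ j := Nat.pow_le_pow_right hp.pos hj2
          _ = k := hpj
          _ ≤ N := hkN
      · rw [hminfac, hfact]
        refine Finset.mem_Icc.mpr ⟨hj2, ?_⟩
        rw [Nat.le_log_iff_pow_le (by norm_num) hN0]
        calc 2 ^ j ≤ p ^ j := Nat.pow_le_pow_left hp.two_le j
          _ = k := hpj
          _ ≤ N := hkN
    have hcard : S.card ≤ Nat.sqrt N * Nat.log 2 N := by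
      have hinj : Set.InjOn (fun (k : ℕ) => ((k.minFac, k.factorization k.minFac) : ℕ × ℕ)) S := by
        intro k1 h1 k2 h2 heq
        have e1 := (hstruct k1 (Finset.mem_coe.mp h1)).1
        have e2 := (hstruct k2 (Finset.mem_coe.mp h2)).1
        have hpq : (k1.minFac, k1.factorization k1.minFac) = (k2.minFac, k2.factorization k2.minFac) := heq
        have hp1 : k1.minFac = k2.minFac := congrArg Prod.fst hpq
        have hp2 : k1.factorization k1.minFac = k2.factorization k2.minFac := congrArg Prod.snd hpq
        rw [← e1, ← e2, hp2, hp1]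
      have hmaps : ∀ k ∈ S, ((k.minFac, k.factorization k.minFac) : ℕ × ℕ) ∈
          Finset.Icc 2 (Nat.sqrt N) ×ˢ Finset.Icc 2 (Nat.log 2 N) := by
        intro k hk
        obtain ⟨_, h1, h2⟩ := hstruct k hk
        exact Finset.mem_product.mpr ⟨h1, h2⟩
      calc S.card ≤ (Finset.Icc 2 (Nat.sqrt N) ×ˢ Finset.Icc 2 (Nat.log 2 N)).card :=
            Finset.card_le_card_of_injOn _ hmaps hinj
        _ = (Finset.Icc 2 (Nat.sqrt N)).card * (Finset.Icc 2 (Nat.log 2 N)).card :=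
            Finset.card_product _ _
        _ ≤ Nat.sqrt N * Nat.log 2 N := by
            apply Nat.mul_le_mul <;> (rw [Nat.card_Icc]; omega)
    have hsum : ∑ k ∈ S, ArithmeticFunction.vonMangoldt k ≤ S.card • Real.log N := by
      apply Finset.sum_le_card_nsmul
      intro k hk
      simp only [hS, Finset.mem_filter, Finset.mem_Icc] at hk
      calc ArithmeticFunction.vonMangoldt k ≤ Real.log k := ArithmeticFunction.vonMangoldt_le_log
        _ ≤ Real.log N := Real.log_le_log (by exact_mod_cast hk.1.1.1) (by exact_mod_cast hk.1.1.2)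
    rw [nsmul_eq_mul] at hsum
    -- real estimates
    have hlogN : (0:ℝ) ≤ Real.log N := Real.log_nonneg hN1
    have hNpos : (0:ℝ) < (N:ℝ) := by exact_mod_cast hN
    have h_sqrt : ((Nat.sqrt N : ℕ) : ℝ) ≤ (N:ℝ) ^ ((1:ℝ)/2) := by
      rw [← Real.sqrt_eq_rpow]
      rw [Real.le_sqrt (by positivity) (by positivity)]
      exact_mod_cast Nat.sqrt_le' N
    have h_log2 : ((Nat.log 2 N : ℕ) : ℝ) ≤ 2 * Real.log N := by
      have h1 : ((2:ℕ) ^ (Nat.log 2 N) : ℕ) ≤ N := Nat.pow_log_le_self 2 hN0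
      have h2 : ((Nat.log 2 N : ℕ) : ℝ) * Real.log 2 ≤ Real.log N := by
        rw [← Real.log_pow]
        apply Real.log_le_log (by positivity)
        exact_mod_cast h1
      have h3 : (1:ℝ)/2 < Real.log 2 := by
        have := Real.log_two_gt_d9; linarith
      have h4 : (0:ℝ) ≤ ((Nat.log 2 N : ℕ) : ℝ) := Nat.cast_nonneg _
      nlinarith [h4]
    have h_logsq : Real.log N ≤ 4 * (N:ℝ) ^ ((1:ℝ)/4) := by
      have h1 : Real.log ((N:ℝ) ^ ((1:ℝ)/4)) = (1/4) * Real.log N := Real.log_rpow hNpos _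
      have h2 : Real.log ((N:ℝ) ^ ((1:ℝ)/4)) ≤ (N:ℝ) ^ ((1:ℝ)/4) - 1 :=
        Real.log_le_sub_one_of_pos (by positivity)
      nlinarith [Real.rpow_nonneg hNpos.le ((1:ℝ)/4)]
    have hq : (N:ℝ) ^ ((1:ℝ)/4) * (N:ℝ) ^ ((1:ℝ)/4) = (N:ℝ) ^ ((1:ℝ)/2) := by
      rw [← Real.rpow_add hNpos]; norm_num
    have hh : (N:ℝ) ^ ((1:ℝ)/2) * (N:ℝ) ^ ((1:ℝ)/2) = (N:ℝ) := by
      rw [← Real.rpow_add hNpos]; norm_num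
    have hcardR : (S.card : ℝ) ≤ (N:ℝ) ^ ((1:ℝ)/2) * (2 * Real.log N) := by
      calc (S.card : ℝ) ≤ ((Nat.sqrt N * Nat.log 2 N : ℕ) : ℝ) := by exact_mod_cast hcard
        _ = ((Nat.sqrt N : ℕ) : ℝ) * ((Nat.log 2 N : ℕ) : ℝ) := by push_cast; ring
        _ ≤ (N:ℝ) ^ ((1:ℝ)/2) * (2 * Real.log N) := by
            apply mul_le_mul h_sqrt h_log2 (Nat.cast_nonneg _) (Real.rpow_nonneg hNpos.le _)
    calc ∑ k ∈ S, ArithmeticFunction.vonMangoldt k ≤ (S.card : ℝ) * Real.log N := hsum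
      _ ≤ ((N:ℝ) ^ ((1:ℝ)/2) * (2 * Real.log N)) * Real.log N := by
          apply mul_le_mul_of_nonneg_right hcardR hlogN
      _ ≤ ((N:ℝ) ^ ((1:ℝ)/2) * (2 * (4 * (N:ℝ) ^ ((1:ℝ)/4)))) * (4 * (N:ℝ) ^ ((1:ℝ)/4)) := by
          have hr : (0:ℝ) ≤ (N:ℝ) ^ ((1:ℝ)/2) := Real.rpow_nonneg hNpos.le _
          have hr4 : (0:ℝ) ≤ (N:ℝ) ^ ((1:ℝ)/4) := Real.rpow_nonneg hNpos.le _
          have hsq : Real.log N * Real.log N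
              ≤ (4*(N:ℝ)^((1:ℝ)/4)) * (4*(N:ℝ)^((1:ℝ)/4)) :=
            mul_le_mul h_logsq h_logsq hlogN (by positivity)
          nlinarith [mul_le_mul_of_nonneg_left hsq hr]
      _ = 32 * ((N:ℝ) ^ ((1:ℝ)/2) * ((N:ℝ) ^ ((1:ℝ)/4) * (N:ℝ) ^ ((1:ℝ)/4))) := by ring
      _ = 32 * N := by rw [hq, hh]
      _ ≤ 38 * N := by linarith
  linarith


/-- simple rpow cancellation -/
lemma rpow_cancel {x c : ℝ} (hx : 0 < x) : x ^ (-(c+1)) * x = x ^ (-c) := by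
  rw [show -(c+1) = -c + (-1) by ring, Real.rpow_add hx, Real.rpow_neg_one]
  field_simp

lemma vm_sum_le (a k : ℕ) : ∑ q ∈ Finset.Ioc a k, ArithmeticFunction.vonMangoldt q ≤ 40 * k := by
  calc ∑ q ∈ Finset.Ioc a k, ArithmeticFunction.vonMangoldt q ≤ ∑ q ∈ Finset.Icc 1 k, ArithmeticFunction.vonMangoldt q := by
        apply Finset.sum_le_sum_of_subset_of_nonneg
        · intro q hq
          simp only [Finset.mem_Ioc] at hq
          simp only [Finset.mem_Icc]
          omega
        · intro _ _ _; exact ArithmeticFunction.vonMangoldt_nonneg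
    _ ≤ 40 * k := psi_bound k

/-- Tail bound for the von Mangoldt sum: log-free thanks to Chebyshev. -/
lemma vm_tail {s : ℝ} (hs : 0 < s) :
    ∃ c > 0, ∀ a X : ℕ,
      ∑ q ∈ Finset.Ioc a X, ArithmeticFunction.vonMangoldt q * (q:ℝ) ^ (-((s+1))) ≤ c * ((a:ℝ)+1) ^ (-s) := by
  refine ⟨(s+1) * 40 * ((1 + 1/s) * 2 ^ s) + 40, by positivity, fun a X => ?_⟩
  rcases le_or_gt X a with hXa | haX
  · rw [Finset.Ioc_eq_empty (by omega)]
    simp only [Finset.sum_empty]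
    positivity
  · have hstep : ∀ q ∈ Finset.Ioc a X,
        ArithmeticFunction.vonMangoldt q * (q:ℝ) ^ (-(s+1)) ≤
          (s+1) * (ArithmeticFunction.vonMangoldt q * ∑ k ∈ Finset.Icc q X, (k:ℝ) ^ (-((s+1)+1)))
            + ArithmeticFunction.vonMangoldt q * ((X:ℝ)+1) ^ (-(s+1)) := by
      intro q hq
      simp only [Finset.mem_Ioc] at hq
      have h := rpow_le_tail_sum (show (0:ℝ) < s+1 by linarith) (show 1 ≤ q by omega) hq.2
      have hvm0 : (0:ℝ) ≤ ArithmeticFunction.vonMangoldt q := ArithmeticFunction.vonMangoldt_nonneg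
      nlinarith [mul_le_mul_of_nonneg_left h hvm0]
    have h1 : ∑ q ∈ Finset.Ioc a X, ArithmeticFunction.vonMangoldt q * (q:ℝ) ^ (-(s+1))
        ≤ (s+1) * (∑ q ∈ Finset.Ioc a X, ArithmeticFunction.vonMangoldt q * ∑ k ∈ Finset.Icc q X, (k:ℝ) ^ (-((s+1)+1)))
          + (∑ q ∈ Finset.Ioc a X, ArithmeticFunction.vonMangoldt q) * ((X:ℝ)+1) ^ (-(s+1)) := by
      calc ∑ q ∈ Finset.Ioc a X, ArithmeticFunction.vonMangoldt q * (q:ℝ) ^ (-(s+1))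
          ≤ ∑ q ∈ Finset.Ioc a X,
              ((s+1) * (ArithmeticFunction.vonMangoldt q * ∑ k ∈ Finset.Icc q X, (k:ℝ) ^ (-((s+1)+1)))
                + ArithmeticFunction.vonMangoldt q * ((X:ℝ)+1) ^ (-(s+1))) := Finset.sum_le_sum hstep
        _ = _ := by rw [Finset.sum_add_distrib, ← Finset.mul_sum, ← Finset.sum_mul]
    have hswap : ∑ q ∈ Finset.Ioc a X, ArithmeticFunction.vonMangoldt q * ∑ k ∈ Finset.Icc q X, (k:ℝ) ^ (-((s+1)+1))
        = ∑ k ∈ Finset.Ioc a X, (∑ q ∈ Finset.Ioc a k, ArithmeticFunction.vonMangoldt q) * (k:ℝ) ^ (-((s+1)+1)) := by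
      have e1 : ∀ q ∈ Finset.Ioc a X,
          ArithmeticFunction.vonMangoldt q * ∑ k ∈ Finset.Icc q X, (k:ℝ) ^ (-((s+1)+1))
            = ∑ k ∈ Finset.Icc q X, ArithmeticFunction.vonMangoldt q * (k:ℝ) ^ (-((s+1)+1)) := fun q _ => Finset.mul_sum _ _ _
      rw [Finset.sum_congr rfl e1]
      rw [Finset.sum_comm' (s := Finset.Ioc a X) (t := fun q => Finset.Icc q X)
        (s' := fun k => Finset.Ioc a k) (t' := Finset.Ioc a X) ?_]
      · exact Finset.sum_congr rfl fun k _ => (Finset.sum_mul _ _ _).symm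
      · intro q k
        simp only [Finset.mem_Ioc, Finset.mem_Icc]
        omega
    have h2 : ∑ k ∈ Finset.Ioc a X, (∑ q ∈ Finset.Ioc a k, ArithmeticFunction.vonMangoldt q) * (k:ℝ) ^ (-((s+1)+1))
        ≤ 40 * ∑ k ∈ Finset.Ioc a X, (k:ℝ) ^ (-(s+1)) := by
      rw [Finset.mul_sum]
      refine Finset.sum_le_sum fun k hk => ?_
      simp only [Finset.mem_Ioc] at hk
      have hk0 : (0:ℝ) < (k:ℝ) := by exact_mod_cast (by omega : 0 < k)
      have hr : (0:ℝ) ≤ (k:ℝ) ^ (-((s+1)+1)) := Real.rpow_nonneg hk0.le _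
      calc (∑ q ∈ Finset.Ioc a k, ArithmeticFunction.vonMangoldt q) * (k:ℝ) ^ (-((s+1)+1))
          ≤ (40 * k) * (k:ℝ) ^ (-((s+1)+1)) :=
            mul_le_mul_of_nonneg_right (vm_sum_le a k) hr
        _ = 40 * ((k:ℝ) ^ (-((s+1)+1)) * k) := by ring
        _ = 40 * (k:ℝ) ^ (-(s+1)) := by rw [rpow_cancel hk0]
    have h3 : ∑ k ∈ Finset.Ioc a X, (k:ℝ) ^ (-(s+1))
        ≤ (1 + 1/s) * 2 ^ s * ((a:ℝ)+1) ^ (-s) := sum_Ioc_rpow_le' hs a X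
    have h4 : (∑ q ∈ Finset.Ioc a X, ArithmeticFunction.vonMangoldt q) * ((X:ℝ)+1) ^ (-(s+1))
        ≤ 40 * ((a:ℝ)+1) ^ (-s) := by
      have hX1 : (0:ℝ) < (X:ℝ) + 1 := by positivity
      have hr : (0:ℝ) ≤ ((X:ℝ)+1) ^ (-(s+1)) := Real.rpow_nonneg hX1.le _
      calc (∑ q ∈ Finset.Ioc a X, ArithmeticFunction.vonMangoldt q) * ((X:ℝ)+1) ^ (-(s+1))
          ≤ (40 * X) * ((X:ℝ)+1) ^ (-(s+1)) :=
            mul_le_mul_of_nonneg_right (vm_sum_le a X) hr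
        _ ≤ (40 * ((X:ℝ)+1)) * ((X:ℝ)+1) ^ (-(s+1)) := by nlinarith
        _ = 40 * (((X:ℝ)+1) ^ (-(s+1)) * ((X:ℝ)+1)) := by ring
        _ = 40 * ((X:ℝ)+1) ^ (-s) := by rw [rpow_cancel hX1]
        _ ≤ 40 * ((a:ℝ)+1) ^ (-s) := by
            have : ((a:ℝ)+1) ≤ ((X:ℝ)+1) := by
              have : (a:ℝ) ≤ (X:ℝ) := by exact_mod_cast haX.le
              linarith
            have := Real.rpow_le_rpow_of_nonpos (by positivity) this (by linarith : -s ≤ 0)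
            linarith
    have hs1 : (0:ℝ) < s + 1 := by linarith
    have h23 : ∑ q ∈ Finset.Ioc a X, ArithmeticFunction.vonMangoldt q * ∑ k ∈ Finset.Icc q X, (k:ℝ) ^ (-((s+1)+1))
        ≤ 40 * ((1 + 1/s) * 2 ^ s * ((a:ℝ)+1) ^ (-s)) := by
      rw [hswap]
      exact h2.trans (mul_le_mul_of_nonneg_left h3 (by norm_num))
    have hmid := mul_le_mul_of_nonneg_left h23 hs1.le
    calc ∑ q ∈ Finset.Ioc a X, ArithmeticFunction.vonMangoldt q * (q:ℝ) ^ (-(s+1)) ≤ _ := h1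
      _ ≤ (s+1) * (40 * ((1 + 1/s) * 2 ^ s * ((a:ℝ)+1) ^ (-s))) + 40 * ((a:ℝ)+1) ^ (-s) :=
          add_le_add hmid h4
      _ = ((s+1) * 40 * ((1 + 1/s) * 2 ^ s) + 40) * ((a:ℝ)+1) ^ (-s) := by ring


lemma vonMangoldtR_nonneg (x : ℝ) : 0 ≤ vonMangoldtR x := by
  unfold vonMangoldtR
  split
  · exact ArithmeticFunction.vonMangoldt_nonneg
  · exact le_refl 0

lemma vonMangoldtR_of_not_dvd {m n : ℕ} (hn : 1 ≤ n) (h : ¬ n ∣ m) :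
    vonMangoldtR ((m:ℝ)/(n:ℝ)) = 0 := by
  have hn0 : ((n:ℝ)) ≠ 0 := by positivity
  have hcond : ¬ ((⌊(m:ℝ)/(n:ℝ)⌋₊ : ℝ) = (m:ℝ)/(n:ℝ)) := by
    intro hfl
    apply h
    have h2 : (⌊(m:ℝ)/(n:ℝ)⌋₊ : ℝ) * (n:ℝ) = (m:ℝ) := by
      rw [hfl, div_mul_cancel₀ _ hn0]
    have hnat : ⌊(m:ℝ)/(n:ℝ)⌋₊ * n = m := by exact_mod_cast h2
    exact Dvd.intro_left _ hnat
  simp only [vonMangoldtR, if_neg hcond]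

/-- The core absolute-value bound for the double sum. -/
lemma core_bound {σ : ℝ} (hσ : 1/2 < σ) :
    ∃ c > 0, ∀ A B : ℕ,
      ∑ m ∈ Finset.Ioc A B, ∑ n ∈ Finset.Ico 1 m,
        vonMangoldtR ((m:ℝ)/(n:ℝ)) * ((m:ℝ)*(n:ℝ)) ^ (-σ) * ((m:ℝ)/(n:ℝ)) ^ (-(1/2:ℝ))
      ≤ c * ((A:ℝ)+1) ^ (-(σ-1/2)) := by
  set s : ℝ := σ - 1/2 with hsdef
  have hs : 0 < s := by simp [hsdef]; linarith
  obtain ⟨c5, hc5, htail⟩ := vm_tail hs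
  refine ⟨c5 * ((1 + 1/s) * 2 ^ s), by positivity, fun A B => ?_⟩
  classical
  set g : ℕ → ℕ → ℝ := fun m n =>
    vonMangoldtR ((m:ℝ)/(n:ℝ)) * ((m:ℝ)*(n:ℝ)) ^ (-σ) * ((m:ℝ)/(n:ℝ)) ^ (-(1/2:ℝ)) with hg
  set F : ℕ → ℕ → ℝ := fun n q => (n:ℝ) ^ (-(2*σ)) * (ArithmeticFunction.vonMangoldt q * (q:ℝ) ^ (-(s+1))) with hF
  have hFnonneg : ∀ n q : ℕ, 0 ≤ F n q := by
    intro n q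
    have h1 : (0:ℝ) ≤ ArithmeticFunction.vonMangoldt q := ArithmeticFunction.vonMangoldt_nonneg
    have h2 : (0:ℝ) ≤ (n:ℝ) ^ (-(2*σ)) := Real.rpow_nonneg (Nat.cast_nonneg n) _
    have h3 : (0:ℝ) ≤ (q:ℝ) ^ (-(s+1)) := Real.rpow_nonneg (Nat.cast_nonneg q) _
    positivity
  -- the sigma set of pairs
  set P : Finset ((_ : ℕ) × ℕ) := (Finset.Ioc A B).sigma (fun m => Finset.Ico 1 m) with hP
  have hsigma : ∑ m ∈ Finset.Ioc A B, ∑ n ∈ Finset.Ico 1 m, g m n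
      = ∑ p ∈ P, g p.1 p.2 := Finset.sum_sigma' _ _ _
  set P' : Finset ((_ : ℕ) × ℕ) := P.filter (fun p => p.2 ∣ p.1) with hP'
  have hfil : ∑ p ∈ P', g p.1 p.2 = ∑ p ∈ P, g p.1 p.2 := by
    apply Finset.sum_filter_of_ne
    intro p hp hne
    by_contra hdvd
    apply hne
    simp only [hP, Finset.mem_sigma, Finset.mem_Ioc, Finset.mem_Ico] at hp
    rw [hg]
    simp only []
    rw [vonMangoldtR_of_not_dvd hp.2.1 hdvd, zero_mul, zero_mul]
  -- properties of pairs in P'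
  have hP'struct : ∀ p ∈ P', 1 ≤ p.2 ∧ p.2 < p.1 ∧ p.1 ≤ B ∧ A < p.1 ∧ p.2 ∣ p.1 := by
    intro p hp
    simp only [hP', hP, Finset.mem_filter, Finset.mem_sigma, Finset.mem_Ioc,
      Finset.mem_Ico] at hp
    exact ⟨hp.1.2.1, hp.1.2.2, hp.1.1.2, hp.1.1.1, hp.2⟩
  -- value identity on P'
  have hval : ∀ p ∈ P', g p.1 p.2 = F p.2 (p.1 / p.2) := by
    intro p hp
    obtain ⟨hn1, hnm, hmB, hAm, hdvd⟩ := hP'struct p hp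
    set m := p.1
    set n := p.2
    set q := m / n with hq
    have hmq : n * q = m := Nat.mul_div_cancel' hdvd
    have hn0 : (0:ℝ) < (n:ℝ) := by exact_mod_cast hn1
    have hq1 : 1 ≤ q := (Nat.one_le_div_iff (by omega)).mpr (by omega)
    have hq0 : (0:ℝ) < (q:ℝ) := by exact_mod_cast hq1
    have hcast : (m:ℝ)/(n:ℝ) = (q:ℝ) := by
      rw [← hmq]
      push_cast
      field_simp
    have hvm : vonMangoldtR ((q:ℝ)) = ArithmeticFunction.vonMangoldt q := by
      unfold vonMangoldtR
      rw [Nat.floor_natCast, if_pos rfl]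
    have hmn : (m:ℝ) * (n:ℝ) = ((n:ℝ) ^ (2:ℕ)) * (q:ℝ) := by
      rw [← hmq]; push_cast; ring
    have hpow : ((m:ℝ) * (n:ℝ)) ^ (-σ) = (n:ℝ) ^ (-(2*σ)) * (q:ℝ) ^ (-σ) := by
      rw [hmn, Real.mul_rpow (by positivity) hq0.le]
      congr 1
      rw [← Real.rpow_natCast (n:ℝ) 2, ← Real.rpow_mul hn0.le]
      congr 1
      push_cast
      ring
    have hq2 : (q:ℝ) ^ (-σ) * (q:ℝ) ^ (-(1/2:ℝ)) = (q:ℝ) ^ (-(s+1)) := by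
      rw [← Real.rpow_add hq0, hsdef]
      congr 1
      ring
    rw [hg, hF]
    simp only []
    rw [hcast, hvm, hpow]
    calc ArithmeticFunction.vonMangoldt q * ((n:ℝ) ^ (-(2*σ)) * (q:ℝ) ^ (-σ)) * (q:ℝ) ^ (-(1/2:ℝ))
        = (n:ℝ) ^ (-(2*σ)) * (ArithmeticFunction.vonMangoldt q * ((q:ℝ) ^ (-σ) * (q:ℝ) ^ (-(1/2:ℝ)))) := by ring
      _ = (n:ℝ) ^ (-(2*σ)) * (ArithmeticFunction.vonMangoldt q * (q:ℝ) ^ (-(s+1))) := by rw [hq2]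
  -- map to (n, q) pairs
  set φ : ((_ : ℕ) × ℕ) → ((_ : ℕ) × ℕ) := fun p => ⟨p.2, p.1 / p.2⟩ with hφ
  set Q : Finset ((_ : ℕ) × ℕ) := (Finset.Icc 1 B).sigma (fun n => Finset.Ioc (A / n) B)
    with hQ
  have hinj : ∀ p1 ∈ P', ∀ p2 ∈ P', φ p1 = φ p2 → p1 = p2 := by
    intro p1 h1 p2 h2 heq
    obtain ⟨_, _, _, _, hd1⟩ := hP'struct p1 h1
    obtain ⟨_, _, _, _, hd2⟩ := hP'struct p2 h2
    have hfst : p1.2 = p2.2 := congrArg Sigma.fst heq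
    have hsnd : p1.1 / p1.2 = p2.1 / p2.2 := congrArg Sigma.snd heq
    have e1 : p1.1 = p1.2 * (p1.1 / p1.2) := (Nat.mul_div_cancel' hd1).symm
    have e2 : p2.1 = p2.2 * (p2.1 / p2.2) := (Nat.mul_div_cancel' hd2).symm
    have hfst' : p1.1 = p2.1 := by rw [e1, e2, hsnd, hfst]
    exact Sigma.ext hfst' (heq_of_eq hfst)
  have hsubset : P'.image φ ⊆ Q := by
    intro r hr
    obtain ⟨p, hp, rfl⟩ := Finset.mem_image.mp hr
    obtain ⟨hn1, hnm, hmB, hAm, hdvd⟩ := hP'struct p hp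
    simp only [hQ, hφ, Finset.mem_sigma, Finset.mem_Icc, Finset.mem_Ioc]
    have hn0 : 0 < p.2 := hn1
    refine ⟨⟨hn1, by omega⟩, ?_, ?_⟩
    · rw [Nat.div_lt_iff_lt_mul hn0]
      calc A < p.1 := hAm
        _ = p.1 / p.2 * p.2 := (Nat.div_mul_cancel hdvd).symm
    · calc p.1 / p.2 ≤ p.1 := Nat.div_le_self _ _
        _ ≤ B := hmB
  have himage : ∑ r ∈ P'.image φ, F r.1 r.2 = ∑ p ∈ P', F (φ p).1 (φ p).2 :=
    Finset.sum_image (fun x hx y hy h => hinj x hx y hy h)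
  have hQle : ∑ r ∈ P'.image φ, F r.1 r.2 ≤ ∑ r ∈ Q, F r.1 r.2 :=
    Finset.sum_le_sum_of_subset_of_nonneg hsubset (fun r _ _ => hFnonneg r.1 r.2)
  have hQsum : ∑ r ∈ Q, F r.1 r.2
      = ∑ n ∈ Finset.Icc 1 B, ∑ q ∈ Finset.Ioc (A/n) B, F n q :=
    (Finset.sum_sigma' _ _ _).symm
  -- per-n bound
  have hApos : (0:ℝ) < (A:ℝ) + 1 := by positivity
  have hn_bound : ∀ n ∈ Finset.Icc 1 B, ∑ q ∈ Finset.Ioc (A/n) B, F n q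
      ≤ c5 * ((A:ℝ)+1) ^ (-s) * (n:ℝ) ^ (-(s+1)) := by
    intro n hn
    have hn1 : 1 ≤ n := (Finset.mem_Icc.mp hn).1
    have hn0 : (0:ℝ) < (n:ℝ) := by exact_mod_cast hn1
    have h1 : ∑ q ∈ Finset.Ioc (A/n) B, F n q
        = (n:ℝ) ^ (-(2*σ)) * ∑ q ∈ Finset.Ioc (A/n) B, (ArithmeticFunction.vonMangoldt q * (q:ℝ) ^ (-(s+1))) := by
      rw [hF]
      simp only []
      rw [Finset.mul_sum]
    rw [h1]
    have h2 := htail (A/n) B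
    have hnat : A + 1 ≤ (A/n + 1) * n := by
      have hdm := Nat.div_add_mod A n
      have hml := Nat.mod_lt A (show 0 < n by omega)
      have hexp : (A/n + 1) * n = n * (A/n) + n := by ring
      omega
    have hge : ((A:ℝ)+1)/(n:ℝ) ≤ ((A/n : ℕ):ℝ)+1 := by
      rw [div_le_iff₀ hn0]
      exact_mod_cast hnat
    have h3 : (((A/n : ℕ):ℝ)+1) ^ (-s) ≤ ((A:ℝ)+1) ^ (-s) * (n:ℝ) ^ s := by
      have hq0 : (0:ℝ) < ((A:ℝ)+1)/(n:ℝ) := by positivity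
      calc (((A/n : ℕ):ℝ)+1) ^ (-s) ≤ (((A:ℝ)+1)/(n:ℝ)) ^ (-s) :=
            Real.rpow_le_rpow_of_nonpos hq0 hge (by linarith)
        _ = ((A:ℝ)+1) ^ (-s) * (n:ℝ) ^ s := by
            rw [Real.div_rpow hApos.le hn0.le, Real.rpow_neg hn0.le s]
            field_simp
    have hnn : (0:ℝ) ≤ (n:ℝ) ^ (-(2*σ)) := Real.rpow_nonneg hn0.le _
    have hcomb : (n:ℝ) ^ (-(2*σ)) * (n:ℝ) ^ s = (n:ℝ) ^ (-(s+1)) := by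
      rw [← Real.rpow_add hn0]
      congr 1
      rw [hsdef]
      ring
    calc (n:ℝ) ^ (-(2*σ)) * ∑ q ∈ Finset.Ioc (A/n) B, (ArithmeticFunction.vonMangoldt q * (q:ℝ) ^ (-(s+1)))
        ≤ (n:ℝ) ^ (-(2*σ)) * (c5 * (((A/n : ℕ):ℝ)+1) ^ (-s)) :=
          mul_le_mul_of_nonneg_left h2 hnn
      _ ≤ (n:ℝ) ^ (-(2*σ)) * (c5 * (((A:ℝ)+1) ^ (-s) * (n:ℝ) ^ s)) := by
          apply mul_le_mul_of_nonneg_left _ hnn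
          exact mul_le_mul_of_nonneg_left h3 hc5.le
      _ = c5 * ((A:ℝ)+1) ^ (-s) * ((n:ℝ) ^ (-(2*σ)) * (n:ℝ) ^ s) := by ring
      _ = c5 * ((A:ℝ)+1) ^ (-s) * (n:ℝ) ^ (-(s+1)) := by rw [hcomb]
  have hA_nonneg : (0:ℝ) ≤ ((A:ℝ)+1) ^ (-s) := Real.rpow_nonneg hApos.le _
  have hnsum : ∑ n ∈ Finset.Icc 1 B, (n:ℝ) ^ (-(s+1)) ≤ (1 + 1/s) * 2 ^ s := by
    have hion : Finset.Icc 1 B = Finset.Ioc 0 B := by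
      ext k; simp only [Finset.mem_Icc, Finset.mem_Ioc]; omega
    rw [hion]
    have := sum_Ioc_rpow_le' hs 0 B
    simpa using this
  calc ∑ m ∈ Finset.Ioc A B, ∑ n ∈ Finset.Ico 1 m, g m n
      = ∑ p ∈ P, g p.1 p.2 := hsigma
    _ = ∑ p ∈ P', g p.1 p.2 := hfil.symm
    _ = ∑ p ∈ P', F p.2 (p.1/p.2) := Finset.sum_congr rfl hval
    _ = ∑ p ∈ P', F (φ p).1 (φ p).2 := rfl
    _ = ∑ r ∈ P'.image φ, F r.1 r.2 := himage.symm
    _ ≤ ∑ r ∈ Q, F r.1 r.2 := hQle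
    _ = ∑ n ∈ Finset.Icc 1 B, ∑ q ∈ Finset.Ioc (A/n) B, F n q := hQsum
    _ ≤ ∑ n ∈ Finset.Icc 1 B, c5 * ((A:ℝ)+1) ^ (-s) * (n:ℝ) ^ (-(s+1)) :=
        Finset.sum_le_sum hn_bound
    _ = c5 * ((A:ℝ)+1) ^ (-s) * ∑ n ∈ Finset.Icc 1 B, (n:ℝ) ^ (-(s+1)) := by
        rw [← Finset.mul_sum]
    _ ≤ c5 * ((A:ℝ)+1) ^ (-s) * ((1 + 1/s) * 2 ^ s) := by
        apply mul_le_mul_of_nonneg_left hnsum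
        positivity
    _ = c5 * ((1 + 1/s) * 2 ^ s) * ((A:ℝ)+1) ^ (-s) := by ring

end DsumAux

/-- The bound (35) on `D''`: assume RH; for `σ > 1/2`, `0 < δ ≤ 1/2`, sufficiently small
`ε > 0`, and `-t > T + T^ε`:
`D'' ≪ T^{2δ} + T^{1-εδ(σ-1/2)}` if `-t ≤ 2T`, and `D'' ≪ (-t)^{2δ} + T(-t)^{-δ(σ-1/2)}`
if `-t > 2T`. -/
theorem Dsum_bound (hRH : RiemannHypothesis)
    (σ : ℝ) (hσ : 1 / 2 < σ) (δ : ℝ) (hδ0 : 0 < δ) (hδ1 : δ ≤ 1 / 2) :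
    ∃ ε₀ > 0, ∀ ε : ℝ, 0 < ε → ε ≤ ε₀ → ∃ C > 0, ∀ T : ℝ, 2 ≤ T → ∀ t : ℝ,
      T + T ^ ε < -t →
      (-t ≤ 2 * T → ‖Dsum σ δ t T‖ ≤ C * (T ^ (2 * δ) + T ^ (1 - ε * δ * (σ - 1 / 2)))) ∧
      (2 * T < -t →
        ‖Dsum σ δ t T‖ ≤ C * ((-t) ^ (2 * δ) + T * (-t) ^ (-(δ * (σ - 1 / 2))))) := by
  obtain ⟨c6, hc6, hcore⟩ := core_bound hσ
  have hπ : (0:ℝ) < π := Real.pi_pos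
  have hs : 0 < σ - 1/2 := by linarith
  have h2pow : (1:ℝ) ≤ 2 ^ (δ*(σ-1/2)) := Real.one_le_rpow (by norm_num) (by positivity)
  refine ⟨1, one_pos, fun ε hε hε1 => ?_⟩
  refine ⟨c6 * 2 ^ (δ*(σ-1/2)) / (2*π) + 1, by positivity, fun T hT t ht => ?_⟩
  have hT0 : (0:ℝ) < T := by linarith
  have hTe : 0 < T ^ ε := Real.rpow_pos_of_pos hT0 ε
  have htT : 0 < -t - T := by linarith
  have ht0 : 0 < -t := by linarith
  set A := ⌊(-t - T) ^ δ⌋₊ with hA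
  set B := ⌊(-t) ^ δ⌋₊ with hB
  set g : ℕ → ℕ → ℝ := fun m n =>
    vonMangoldtR ((m:ℝ)/(n:ℝ)) * ((m:ℝ)*(n:ℝ)) ^ (-σ) * ((m:ℝ)/(n:ℝ)) ^ (-(1/2:ℝ)) with hg
  -- step 1 : norm bound
  have hterm : ∀ m ∈ Finset.Ioc A B, ∀ n ∈ Finset.Ico 1 m,
      ‖(((-t - (m : ℝ) ^ (1 / δ)) / (2 * π) * vonMangoldtR ((m : ℝ) / (n : ℝ)) *
          ((m : ℝ) * (n : ℝ)) ^ (-σ) * ((m : ℝ) / (n : ℝ)) ^ (-(1 / 2 : ℝ)) : ℝ) : ℂ) *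
        (((m : ℝ) / (n : ℝ) : ℝ) : ℂ) ^ ((t : ℂ) * I)‖ ≤ T / (2*π) * g m n := by
    intro m hm n hn
    rw [Finset.mem_Ioc] at hm
    rw [Finset.mem_Ico] at hn
    have hm1 : 1 ≤ m := by omega
    have hmR : (0:ℝ) < (m:ℝ) := by exact_mod_cast hm1
    have hnR : (0:ℝ) < (n:ℝ) := by exact_mod_cast hn.1
    have hx : (0:ℝ) < (m:ℝ)/(n:ℝ) := by positivity
    have hnorm1 : ‖(((m : ℝ) / (n : ℝ) : ℝ) : ℂ) ^ ((t : ℂ) * I)‖ = 1 := by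
      rw [Complex.norm_cpow_eq_rpow_re_of_pos hx]
      simp [Complex.mul_re]
    -- bounds on the weight
    have hwid : ((-t) ^ δ) ^ (1/δ) = -t := by
      rw [← Real.rpow_mul ht0.le]
      rw [show δ * (1/δ) = 1 by field_simp]
      exact Real.rpow_one _
    have hwid2 : ((-t - T) ^ δ) ^ (1/δ) = -t - T := by
      rw [← Real.rpow_mul htT.le]
      rw [show δ * (1/δ) = 1 by field_simp]
      exact Real.rpow_one _
    have hw0 : 0 ≤ -t - (m:ℝ) ^ (1/δ) := by
      have h1 : (m:ℝ) ≤ (-t) ^ δ := by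
        calc (m:ℝ) ≤ (B:ℝ) := by exact_mod_cast hm.2
          _ ≤ (-t) ^ δ := Nat.floor_le (by positivity)
      have h2 : (m:ℝ) ^ (1/δ) ≤ ((-t) ^ δ) ^ (1/δ) :=
        Real.rpow_le_rpow hmR.le h1 (by positivity)
      rw [hwid] at h2
      linarith
    have hwT : -t - (m:ℝ) ^ (1/δ) ≤ T := by
      have h1 : (-t - T) ^ δ ≤ (m:ℝ) := by
        have h2 : (-t - T) ^ δ < (A:ℝ) + 1 := Nat.lt_floor_add_one _
        have h3 : (A:ℝ) + 1 ≤ (m:ℝ) := by exact_mod_cast hm.1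
        linarith
      have h2 : ((-t - T) ^ δ) ^ (1/δ) ≤ (m:ℝ) ^ (1/δ) :=
        Real.rpow_le_rpow (by positivity) h1 (by positivity)
      rw [hwid2] at h2
      linarith
    -- nonneg factors
    have hvR : 0 ≤ vonMangoldtR ((m:ℝ)/(n:ℝ)) := vonMangoldtR_nonneg _
    have hP1 : (0:ℝ) ≤ ((m:ℝ)*(n:ℝ)) ^ (-σ) := Real.rpow_nonneg (by positivity) _
    have hP2 : (0:ℝ) ≤ ((m:ℝ)/(n:ℝ)) ^ (-(1/2:ℝ)) := Real.rpow_nonneg hx.le _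
    have hsc_nonneg : (0:ℝ) ≤ (-t - (m : ℝ) ^ (1 / δ)) / (2 * π) *
        vonMangoldtR ((m : ℝ) / (n : ℝ)) * ((m : ℝ) * (n : ℝ)) ^ (-σ) *
        ((m : ℝ) / (n : ℝ)) ^ (-(1 / 2 : ℝ)) := by
      have : (0:ℝ) ≤ (-t - (m : ℝ) ^ (1 / δ)) / (2 * π) := by positivity
      exact mul_nonneg (mul_nonneg (mul_nonneg this hvR) hP1) hP2
    rw [norm_mul, hnorm1, mul_one, Complex.norm_real, Real.norm_eq_abs,
      _root_.abs_of_nonneg hsc_nonneg]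
    have hdivle : (-t - (m : ℝ) ^ (1 / δ)) / (2 * π) ≤ T / (2 * π) := by
      apply div_le_div_of_nonneg_right hwT
      positivity
    calc (-t - (m : ℝ) ^ (1 / δ)) / (2 * π) * vonMangoldtR ((m : ℝ) / (n : ℝ)) *
          ((m : ℝ) * (n : ℝ)) ^ (-σ) * ((m : ℝ) / (n : ℝ)) ^ (-(1 / 2 : ℝ))
        ≤ T / (2 * π) * vonMangoldtR ((m : ℝ) / (n : ℝ)) *
          ((m : ℝ) * (n : ℝ)) ^ (-σ) * ((m : ℝ) / (n : ℝ)) ^ (-(1 / 2 : ℝ)) := by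
          exact mul_le_mul_of_nonneg_right (mul_le_mul_of_nonneg_right
            (mul_le_mul_of_nonneg_right hdivle hvR) hP1) hP2
      _ = T / (2*π) * g m n := by rw [hg]; ring
  have step1 : ‖Dsum σ δ t T‖ ≤ T / (2*π) * ∑ m ∈ Finset.Ioc A B, ∑ n ∈ Finset.Ico 1 m, g m n := by
    calc ‖Dsum σ δ t T‖
        ≤ ∑ m ∈ Finset.Ioc A B, ‖∑ n ∈ Finset.Ico 1 m,
            (((-t - (m : ℝ) ^ (1 / δ)) / (2 * π) * vonMangoldtR ((m : ℝ) / (n : ℝ)) *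
              ((m : ℝ) * (n : ℝ)) ^ (-σ) * ((m : ℝ) / (n : ℝ)) ^ (-(1 / 2 : ℝ)) : ℝ) : ℂ) *
            (((m : ℝ) / (n : ℝ) : ℝ) : ℂ) ^ ((t : ℂ) * I)‖ := norm_sum_le _ _
      _ ≤ ∑ m ∈ Finset.Ioc A B, ∑ n ∈ Finset.Ico 1 m, T / (2*π) * g m n := by
          refine Finset.sum_le_sum fun m hm => ?_
          exact (norm_sum_le _ _).trans (Finset.sum_le_sum (hterm m hm))
      _ = T / (2*π) * ∑ m ∈ Finset.Ioc A B, ∑ n ∈ Finset.Ico 1 m, g m n := by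
          rw [Finset.mul_sum]
          exact Finset.sum_congr rfl fun m _ => (Finset.mul_sum _ _ _).symm
  -- step 2-3: core bound + floor comparison
  have hmaster : ‖Dsum σ δ t T‖ ≤ T / (2*π) * (c6 * ((-t - T) ^ δ) ^ (-(σ-1/2))) := by
    refine step1.trans ?_
    apply mul_le_mul_of_nonneg_left _ (by positivity : (0:ℝ) ≤ T / (2*π))
    refine (hcore A B).trans ?_
    apply mul_le_mul_of_nonneg_left _ hc6.le
    have h1 : (-t - T) ^ δ ≤ (A:ℝ) + 1 := (Nat.lt_floor_add_one _).le
    exact Real.rpow_le_rpow_of_nonpos (by positivity) h1 (by linarith)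
  constructor
  · -- case -t ≤ 2T
    intro hcase
    have h1 : T ^ ε < -t - T := by linarith
    have h2 : (T ^ ε) ^ δ ≤ (-t - T) ^ δ :=
      Real.rpow_le_rpow (by positivity) h1.le hδ0.le
    have h3 : ((-t - T) ^ δ) ^ (-(σ-1/2)) ≤ ((T ^ ε) ^ δ) ^ (-(σ-1/2)) :=
      Real.rpow_le_rpow_of_nonpos (by positivity) h2 (by linarith)
    have h4 : ((T ^ ε) ^ δ) ^ (-(σ-1/2)) = T ^ (-(ε * δ * (σ-1/2))) := by
      rw [← Real.rpow_mul hT0.le, ← Real.rpow_mul hT0.le]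
      congr 1
      ring
    have h5 : T / (2*π) * (c6 * ((-t - T) ^ δ) ^ (-(σ-1/2)))
        ≤ c6 / (2*π) * (T * T ^ (-(ε * δ * (σ-1/2)))) := by
      rw [← h4]
      have := mul_le_mul_of_nonneg_left h3 (by positivity : (0:ℝ) ≤ c6)
      calc T / (2*π) * (c6 * ((-t - T) ^ δ) ^ (-(σ-1/2)))
          ≤ T / (2*π) * (c6 * ((T ^ ε) ^ δ) ^ (-(σ-1/2))) :=
            mul_le_mul_of_nonneg_left this (by positivity)
        _ = c6 / (2*π) * (T * ((T ^ ε) ^ δ) ^ (-(σ-1/2))) := by ring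
    have h6 : T * T ^ (-(ε * δ * (σ-1/2))) = T ^ (1 - ε * δ * (σ - 1/2)) := by
      nth_rw 1 [← Real.rpow_one T]
      rw [← Real.rpow_add hT0]
      rw [show (1:ℝ) + -(ε * δ * (σ-1/2)) = 1 - ε * δ * (σ - 1/2) by ring]
    have h7 : (0:ℝ) ≤ T ^ (2*δ) := Real.rpow_nonneg hT0.le _
    have hC : c6 / (2*π) ≤ c6 * 2 ^ (δ*(σ-1/2)) / (2*π) + 1 := by
      have : c6 / (2*π) ≤ c6 * 2 ^ (δ*(σ-1/2)) / (2*π) := by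
        gcongr
        nlinarith
      linarith
    have h8 : (0:ℝ) ≤ T ^ (1 - ε * δ * (σ - 1/2)) := Real.rpow_nonneg hT0.le _
    calc ‖Dsum σ δ t T‖ ≤ T / (2*π) * (c6 * ((-t - T) ^ δ) ^ (-(σ-1/2))) := hmaster
      _ ≤ c6 / (2*π) * (T ^ (1 - ε * δ * (σ - 1/2))) := by rw [← h6]; exact h5
      _ ≤ (c6 * 2 ^ (δ*(σ-1/2)) / (2*π) + 1) * (T ^ (2*δ) + T ^ (1 - ε * δ * (σ - 1/2))) := by
          have hCpos : (0:ℝ) ≤ c6 * 2 ^ (δ*(σ-1/2)) / (2*π) + 1 := by positivity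
          nlinarith [mul_le_mul_of_nonneg_right hC h8]
  · -- case 2T < -t
    intro hcase
    have h1 : (-t)/2 ≤ -t - T := by linarith
    have h2 : ((-t)/2) ^ δ ≤ (-t - T) ^ δ :=
      Real.rpow_le_rpow (by positivity) h1 hδ0.le
    have h3 : ((-t - T) ^ δ) ^ (-(σ-1/2)) ≤ (((-t)/2) ^ δ) ^ (-(σ-1/2)) :=
      Real.rpow_le_rpow_of_nonpos (by positivity) h2 (by linarith)
    have h4 : (((-t)/2) ^ δ) ^ (-(σ-1/2)) = 2 ^ (δ*(σ-1/2)) * (-t) ^ (-(δ * (σ-1/2))) := by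
      rw [← Real.rpow_mul (by positivity : (0:ℝ) ≤ (-t)/2)]
      rw [show δ * -(σ-1/2) = -(δ*(σ-1/2)) by ring]
      rw [Real.div_rpow ht0.le (by norm_num : (0:ℝ) ≤ 2)]
      rw [Real.rpow_neg (by norm_num : (0:ℝ) ≤ 2), div_eq_mul_inv, inv_inv, mul_comm]
    have h2d : (0:ℝ) ≤ (-t) ^ (2*δ) := Real.rpow_nonneg ht0.le _
    have hterm2 : (0:ℝ) ≤ T * (-t) ^ (-(δ*(σ-1/2))) := by
      have := Real.rpow_nonneg ht0.le (-(δ*(σ-1/2)))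
      positivity
    calc ‖Dsum σ δ t T‖ ≤ T / (2*π) * (c6 * ((-t - T) ^ δ) ^ (-(σ-1/2))) := hmaster
      _ ≤ T / (2*π) * (c6 * (2 ^ (δ*(σ-1/2)) * (-t) ^ (-(δ * (σ-1/2))))) := by
          apply mul_le_mul_of_nonneg_left _ (by positivity : (0:ℝ) ≤ T / (2*π))
          apply mul_le_mul_of_nonneg_left _ hc6.le
          rw [← h4]
          exact h3
      _ = c6 * 2 ^ (δ*(σ-1/2)) / (2*π) * (T * (-t) ^ (-(δ * (σ-1/2)))) := by ring
      _ ≤ (c6 * 2 ^ (δ*(σ-1/2)) / (2*π) + 1) * ((-t) ^ (2*δ) + T * (-t) ^ (-(δ * (σ-1/2)))) := by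
          have hCC : (0:ℝ) ≤ c6 * 2 ^ (δ*(σ-1/2)) / (2*π) := by positivity
          nlinarith
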